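/- Uniform stability criterion via nested balls: let f, g : D → ℝ be Lipschitz, x* ∈ D with f(x*) = 0, and suppose the solution of ẋ = f(x) + g(x)w(t) (w continuous) satisfies (x − x*, f(x) + g(x)w(t)) ≤ 0 for all t and all x with |x − x*|₂ = 1/l, for every l ∈ ℕ. Then for each l, the closed ball M_l = {x : |x − x*|₂ ≤ 1/l} is forward invariant: any solution with x(t₀) ∈ M_l satisfies x(t) ∈ M_l for all t ≥ t₀ in its interval of existence. -/

import Mathlib

open Set Topology RealInnerProductSpace

set_option maxHeartbeats 1000000

/-- Uniform stability criterion via nested balls: for `ẋ = f(x) + g(x)w(t)` with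
`f, g` Lipschitz, `w` continuous, `f(x*) = 0`, if `(x - x*, f(x) + g(x)w(t)) ≤ 0`
whenever `|x - x*|₂ = 1/l` (for every `l ∈ ℕ`, `l > 0`), then each closed ball
`M_l = {x : |x - x*|₂ ≤ 1/l}` is forward invariant for solutions of the system. -/
theorem stmt13 {n : ℕ}
    (f g : EuclideanSpace ℝ (Fin n) → EuclideanSpace ℝ (Fin n))
    (Kf Kg : NNReal) (hf : LipschitzWith Kf f) (hg : LipschitzWith Kg g)
    (w : ℝ → ℝ) (hw : Continuous w)
    (xs : EuclideanSpace ℝ (Fin n)) (heq : f xs = 0)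
    (hcond : ∀ l : ℕ, 0 < l → ∀ t : ℝ, ∀ x : EuclideanSpace ℝ (Fin n),
      ‖x - xs‖ = 1/(l:ℝ) → ⟪x - xs, f x + w t • g x⟫ ≤ 0) :
    ∀ l : ℕ, 0 < l → ∀ t₀ T : ℝ, ∀ x : ℝ → EuclideanSpace ℝ (Fin n),
      ContinuousOn x (Set.Ico t₀ T) →
      (∀ t ∈ Set.Ico t₀ T,
        x t = x t₀ + ∫ r in t₀..t, (f (x r) + w r • g (x r))) →
      ‖x t₀ - xs‖ ≤ 1/(l:ℝ) →
      ∀ t ∈ Set.Ico t₀ T, ‖x t - xs‖ ≤ 1/(l:ℝ) := by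
  intro l hl t₀ T x hxc hint h0 t ht
  obtain ⟨ht0, htT⟩ := ht
  set r : ℝ := 1/(l:ℝ) with hr
  have hrpos : 0 < r := by
    rw [hr]; positivity
  set F : ℝ → EuclideanSpace ℝ (Fin n) := fun s => f (x s) + w s • g (x s) with hF
  have hFc : ContinuousOn F (Ico t₀ T) := by
    apply ContinuousOn.add
    · exact hf.continuous.comp_continuousOn hxc
    · exact hw.continuousOn.smul (hg.continuous.comp_continuousOn hxc)
  -- right derivative of x
  have hxd : ∀ s ∈ Ico t₀ t, HasDerivWithinAt x (F s) (Ici s) s := by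
    intro s hs
    have hsT : s < T := lt_trans hs.2 htT
    have hsmem : s ∈ Ico t₀ T := ⟨hs.1, hsT⟩
    have hIcoMem : Ico t₀ T ∈ 𝓝[Ici s] s := by
      have : Ici s ∩ Iio T ⊆ Ico t₀ T := fun z hz => ⟨le_trans hs.1 hz.1, hz.2⟩
      exact mem_nhdsWithin.2 ⟨Iio T, isOpen_Iio, hsT, fun z hz => this ⟨hz.2, hz.1⟩⟩
    have hIcoMem' : Ico t₀ T ∈ 𝓝[Ioi s] s :=
      nhdsWithin_mono s Ioi_subset_Ici_self hIcoMem
    have hInt : IntervalIntegrable F MeasureTheory.volume t₀ s := by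
      apply ContinuousOn.intervalIntegrable
      apply hFc.mono
      rw [uIcc_of_le hs.1]
      exact fun z hz => ⟨hz.1, lt_of_le_of_lt hz.2 hsT⟩
    have hmeas : StronglyMeasurableAtFilter F (𝓝[Ioi s] s) MeasureTheory.volume :=
      ⟨Ico t₀ T, hIcoMem', hFc.aestronglyMeasurable measurableSet_Ico⟩
    have hcont : ContinuousWithinAt F (Ioi s) s :=
      (hFc s hsmem).mono_of_mem_nhdsWithin hIcoMem'
    have hX : HasDerivWithinAt (fun z => x t₀ + ∫ u in t₀..z, F u) (F s) (Ici s) s :=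
      ((intervalIntegral.integral_hasDerivWithinAt_right hInt hmeas hcont).const_add (x t₀))
    apply hX.congr_of_eventuallyEq
    · filter_upwards [hIcoMem] with z hz
      exact hint z hz
    · exact hint s hsmem
  -- the squared norm function
  set V : ℝ → ℝ := fun z => ⟪x z - xs, x z - xs⟫ with hV
  have hVnorm : ∀ z, V z = ‖x z - xs‖ ^ 2 := fun z => real_inner_self_eq_norm_sq _
  have hIccsub : Icc t₀ t ⊆ Ico t₀ T := fun z hz => ⟨hz.1, lt_of_le_of_lt hz.2 htT⟩
  have hVc : ContinuousOn V (Icc t₀ t) := by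
    have : ContinuousOn (fun z => x z - xs) (Icc t₀ t) :=
      (hxc.mono hIccsub).sub continuousOn_const
    exact this.inner this
  have hVd : ∀ s ∈ Ico t₀ t, HasDerivWithinAt V (2 * ⟪x s - xs, F s⟫) (Ici s) s := by
    intro s hs
    have h1 := ((hxd s hs).sub_const xs).inner ℝ ((hxd s hs).sub_const xs)
    have h2 : (2 * ⟪x s - xs, F s⟫) = ⟪x s - xs, F s⟫ + ⟪F s, x s - xs⟫ := by
      rw [real_inner_comm (F s) (x s - xs)]; ring
    rw [h2]; exact h1
  -- bound on w on [t₀, t]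
  obtain ⟨C, hC⟩ := (isCompact_Icc (a := t₀) (b := t)).exists_bound_of_continuousOn
    hw.continuousOn
  have hC0 : 0 ≤ C := le_trans (norm_nonneg _) (hC t₀ (left_mem_Icc.2 ht0))
  set K : ℝ := (Kf : ℝ) + C * (Kg : ℝ) + 1 with hK
  have hLK : (Kf : ℝ) + C * (Kg : ℝ) < K := by rw [hK]; linarith
  have hKpos : 0 < K := by positivity
  -- main Gronwall-type estimate
  have key : ∀ ε : ℝ, 0 < ε → V t ≤ r ^ 2 + ε * Real.exp (2 * K * (t - t₀)) := by
    intro ε hε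
    set B : ℝ → ℝ := fun z => r ^ 2 + ε * Real.exp (2 * K * (z - t₀)) with hB
    set B' : ℝ → ℝ := fun z => ε * (Real.exp (2 * K * (z - t₀)) * (2 * K)) with hB'
    have hBd : ∀ z : ℝ, HasDerivAt B (B' z) z := by
      intro z
      have h1 : HasDerivAt (fun z : ℝ => 2 * K * (z - t₀)) (2 * K) z := by
        simpa using ((hasDerivAt_id z).sub_const t₀).const_mul (2 * K)
      exact (((h1.exp).const_mul ε).const_add (r ^ 2)).congr_deriv rfl
    have ha : V t₀ ≤ B t₀ := by
      rw [hVnorm, hB]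
      simp only [sub_self, mul_zero, Real.exp_zero, mul_one]
      nlinarith [pow_le_pow_left₀ (norm_nonneg (x t₀ - xs)) h0 2]
    have bound : ∀ s ∈ Ico t₀ t, V s = B s → 2 * ⟪x s - xs, F s⟫ < B' s := by
      intro s hs hVB
      set y := x s - xs with hy
      set φ := ‖y‖ with hφ
      have hexp : 0 < Real.exp (2 * K * (s - t₀)) := Real.exp_pos _
      have hφ2 : φ ^ 2 = r ^ 2 + ε * Real.exp (2 * K * (s - t₀)) := by
        rw [← hVnorm]; exact hVB
      have hφr : r < φ := by
        apply lt_of_pow_lt_pow_left₀ 2 (norm_nonneg y)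
        rw [hφ2]; nlinarith
      have hφpos : 0 < φ := lt_trans hrpos hφr
      set xh := xs + (r / φ) • y with hxh
      have hxhs : xh - xs = (r / φ) • y := by rw [hxh]; abel
      have hxhnorm : ‖xh - xs‖ = r := by
        rw [hxhs, norm_smul, ← hφ, Real.norm_eq_abs,
          abs_of_pos (div_pos hrpos hφpos), div_mul_cancel₀ _ (ne_of_gt hφpos)]
      have hsph := hcond l hl s xh (by rw [hxhnorm, hr])
      have hinxh : ⟪y, f xh + w s • g xh⟫ ≤ 0 := by
        rw [hxhs, real_inner_smul_left] at hsph
        nlinarith [div_pos hrpos hφpos]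
      -- distance from x s to xh
      have hdist : ‖x s - xh‖ = φ - r := by
        have : x s - xh = (1 - r / φ) • y := by
          rw [hxh, hy]; rw [sub_smul, one_smul]; abel
        rw [this, norm_smul, ← hφ, Real.norm_eq_abs,
          abs_of_pos (by rw [sub_pos]; exact (div_lt_one hφpos).2 hφr)]
        field_simp
      have hws : ‖w s‖ ≤ C := hC s ⟨hs.1, le_of_lt hs.2⟩
      have hFdiff : ‖F s - (f xh + w s • g xh)‖ ≤ ((Kf : ℝ) + ‖w s‖ * (Kg : ℝ)) * (φ - r) := by
        have h1 : F s - (f xh + w s • g xh) = (f (x s) - f xh) + w s • (g (x s) - g xh) := by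
          rw [hF, smul_sub]; module
        rw [h1]
        apply le_trans (norm_add_le _ _)
        have h2 : ‖f (x s) - f xh‖ ≤ (Kf : ℝ) * (φ - r) := by
          have := hf.dist_le_mul (x s) xh
          simp only [dist_eq_norm] at this
          rwa [hdist] at this
        have h3 : ‖g (x s) - g xh‖ ≤ (Kg : ℝ) * (φ - r) := by
          have := hg.dist_le_mul (x s) xh
          simp only [dist_eq_norm] at this
          rwa [hdist] at this
        rw [norm_smul, Real.norm_eq_abs]
        calc ‖f (x s) - f xh‖ + |w s| * ‖g (x s) - g xh‖
            ≤ (Kf : ℝ) * (φ - r) + ‖w s‖ * ((Kg : ℝ) * (φ - r)) := by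
              apply add_le_add h2
              exact mul_le_mul_of_nonneg_left h3 (abs_nonneg _)
          _ = ((Kf : ℝ) + ‖w s‖ * (Kg : ℝ)) * (φ - r) := by ring
      have hinner : ⟪y, F s⟫ ≤ ((Kf : ℝ) + C * (Kg : ℝ)) * (ε * Real.exp (2 * K * (s - t₀))) := by
        have h1 : ⟪y, F s⟫ = ⟪y, f xh + w s • g xh⟫ + ⟪y, F s - (f xh + w s • g xh)⟫ := by
          rw [← inner_add_right]; norm_num
        have h2 : ⟪y, F s - (f xh + w s • g xh)⟫ ≤ φ * (((Kf : ℝ) + ‖w s‖ * (Kg : ℝ)) * (φ - r)) := by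
          apply le_trans (real_inner_le_norm _ _)
          exact mul_le_mul_of_nonneg_left hFdiff (norm_nonneg _)
        have h3 : φ * (((Kf : ℝ) + ‖w s‖ * (Kg : ℝ)) * (φ - r))
            ≤ ((Kf : ℝ) + C * (Kg : ℝ)) * (φ ^ 2 - r ^ 2) := by
          have hwc : (Kf : ℝ) + ‖w s‖ * (Kg : ℝ) ≤ (Kf : ℝ) + C * (Kg : ℝ) := by
            have := mul_le_mul_of_nonneg_right hws (Kg.coe_nonneg)
            linarith
          have hKnn : (0:ℝ) ≤ (Kf : ℝ) + ‖w s‖ * (Kg : ℝ) := by positivity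
          have e1 : φ * (φ - r) ≤ φ ^ 2 - r ^ 2 := by nlinarith
          have e2 : 0 ≤ φ * (φ - r) := mul_nonneg (le_of_lt hφpos) (by linarith)
          calc φ * (((Kf : ℝ) + ‖w s‖ * (Kg : ℝ)) * (φ - r))
              = ((Kf : ℝ) + ‖w s‖ * (Kg : ℝ)) * (φ * (φ - r)) := by ring
            _ ≤ ((Kf : ℝ) + C * (Kg : ℝ)) * (φ ^ 2 - r ^ 2) :=
                mul_le_mul hwc e1 e2 (le_trans hKnn hwc)
        have h4 : φ ^ 2 - r ^ 2 = ε * Real.exp (2 * K * (s - t₀)) := by rw [hφ2]; ring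
        rw [h4] at h3
        linarith
      have hεe : 0 < ε * Real.exp (2 * K * (s - t₀)) := by positivity
      have hstep : ((Kf : ℝ) + C * (Kg : ℝ)) * (ε * Real.exp (2 * K * (s - t₀)))
          < K * (ε * Real.exp (2 * K * (s - t₀))) := mul_lt_mul_of_pos_right hLK hεe
      show 2 * ⟪x s - xs, F s⟫ < ε * (Real.exp (2 * K * (s - t₀)) * (2 * K))
      have hring : ε * (Real.exp (2 * K * (s - t₀)) * (2 * K))
          = 2 * (K * (ε * Real.exp (2 * K * (s - t₀)))) := by ring
      rw [hring]
      linarith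
    have := image_le_of_deriv_right_lt_deriv_boundary hVc hVd ha hBd bound
      (right_mem_Icc.2 ht0)
    rwa [hB] at this
  -- conclude
  have hVt : V t ≤ r ^ 2 := by
    by_contra h
    push_neg at h
    set E0 := Real.exp (2 * K * (t - t₀)) with hE0
    have hE0pos : 0 < E0 := Real.exp_pos _
    have := key ((V t - r ^ 2) / (2 * E0))
      (div_pos (by linarith) (by positivity))
    have h2 : (V t - r ^ 2) / (2 * E0) * E0 = (V t - r ^ 2) / 2 := by
      field_simp
    rw [h2] at this
    linarith
  rw [hVnorm] at hVt
  nlinarith [norm_nonneg (x t - xs)]
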